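/- Let c, m be real numbers with m ≠ 0 and define Υ(w₁,w₂,v₁,v₂) := (1 − w₁v₁)^{−c} · exp((m/2)·(w₁v₂² + 2w₂v₂ + w₂²v₁)/(1 − w₁v₁)) for real w₁, w₂, v₁, v₂ with w₁v₁ < 1. Then on this domain: (i) ∂Υ/∂w₁ − (1/(2m))·∂²Υ/∂w₂² = (c − 1/2)·(v₁/(1−w₁v₁))·Υ, and (ii) ∂Υ/∂v₁ − (1/(2m))·∂²Υ/∂v₂² = (c − 1/2)·(w₁/(1−w₁v₁))·Υ. Equivalently, the Berezin transforms of the subtracted elements are ⟨Pₜ − Pₓ²/(2m)⟩ = (c − 1/2)·v₁/(1−w₁v₁) and ⟨K − G²/(2m)⟩ = (c − 1/2)·w₁/(1−w₁v₁). -/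

import Mathlib

/-- The Leibniz function of the Schrödinger algebra. -/
noncomputable def schrodingerLeibniz (c m w₁ w₂ v₁ v₂ : ℝ) : ℝ :=
  (1 - w₁ * v₁) ^ (-c) *
    Real.exp ((m / 2) * (w₁ * v₂ ^ 2 + 2 * w₂ * v₂ + w₂ ^ 2 * v₁) / (1 - w₁ * v₁))

lemma sl_hasDerivAt_w2 (c m w₁ v₁ v₂ : ℝ) (h : w₁ * v₁ < 1) (w₂ : ℝ) :
    HasDerivAt (fun w' => schrodingerLeibniz c m w₁ w' v₁ v₂)
      (schrodingerLeibniz c m w₁ w₂ v₁ v₂ * (m * (v₂ + w₂ * v₁) / (1 - w₁ * v₁))) w₂ := by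
  have hN : HasDerivAt (fun w' : ℝ => w₁ * v₂ ^ 2 + 2 * w' * v₂ + w' ^ 2 * v₁)
      (2 * v₂ + 2 * w₂ * v₁) w₂ := by
    have h1 := (hasDerivAt_pow 2 w₂).mul_const v₁
    have h2 := ((hasDerivAt_id w₂).const_mul 2).mul_const v₂
    have h0 := hasDerivAt_const w₂ (w₁ * v₂ ^ 2)
    have := (h0.add h2).add h1
    refine this.congr_deriv ?_
    push_cast; ring
  have hg := ((hN.const_mul (m / 2)).div_const (1 - w₁ * v₁)).exp
  have := hg.const_mul ((1 - w₁ * v₁) ^ (-c) : ℝ)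
  refine this.congr_deriv ?_
  simp only [schrodingerLeibniz]; ring

lemma sl_hasDerivAt_v2 (c m w₁ w₂ v₁ : ℝ) (h : w₁ * v₁ < 1) (v₂ : ℝ) :
    HasDerivAt (fun v' => schrodingerLeibniz c m w₁ w₂ v₁ v')
      (schrodingerLeibniz c m w₁ w₂ v₁ v₂ * (m * (w₁ * v₂ + w₂) / (1 - w₁ * v₁))) v₂ := by
  have hN : HasDerivAt (fun v' : ℝ => w₁ * v' ^ 2 + 2 * w₂ * v' + w₂ ^ 2 * v₁)
      (2 * w₁ * v₂ + 2 * w₂) v₂ := by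
    have h1 := (hasDerivAt_pow 2 v₂).const_mul w₁
    have h2 := (hasDerivAt_id v₂).const_mul (2 * w₂)
    have h0 := hasDerivAt_const v₂ (w₂ ^ 2 * v₁)
    have := (h1.add h2).add h0
    refine this.congr_deriv ?_
    push_cast; ring
  have hg := ((hN.const_mul (m / 2)).div_const (1 - w₁ * v₁)).exp
  have := hg.const_mul ((1 - w₁ * v₁) ^ (-c) : ℝ)
  refine this.congr_deriv ?_
  simp only [schrodingerLeibniz]; ring

lemma sl_hasDerivAt_w1 (c m w₂ v₁ v₂ : ℝ) (w₁ : ℝ) (h : w₁ * v₁ < 1) :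
    HasDerivAt (fun w => schrodingerLeibniz c m w w₂ v₁ v₂)
      (schrodingerLeibniz c m w₁ w₂ v₁ v₂ *
        (c * v₁ / (1 - w₁ * v₁) +
          ((m / 2) * v₂ ^ 2 * (1 - w₁ * v₁) +
            (m / 2) * (w₁ * v₂ ^ 2 + 2 * w₂ * v₂ + w₂ ^ 2 * v₁) * v₁) /
            (1 - w₁ * v₁) ^ 2)) w₁ := by
  have hD : (0:ℝ) < 1 - w₁ * v₁ := by linarith
  have hDne : (1 - w₁ * v₁) ≠ 0 := ne_of_gt hD
  have hDlin : HasDerivAt (fun w : ℝ => 1 - w * v₁) (-v₁) w₁ := by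
    have := (hasDerivAt_const w₁ (1:ℝ)).sub ((hasDerivAt_id w₁).mul_const v₁)
    exact this.congr_deriv (by ring)
  have hf : HasDerivAt (fun w : ℝ => (1 - w * v₁) ^ (-c))
      ((-v₁) * (-c) * (1 - w₁ * v₁) ^ (-c - 1)) w₁ :=
    hDlin.rpow_const (Or.inl hDne)
  have hNl : HasDerivAt (fun w : ℝ => (m / 2) * (w * v₂ ^ 2 + 2 * w₂ * v₂ + w₂ ^ 2 * v₁))
      ((m / 2) * v₂ ^ 2) w₁ := by
    have := (((hasDerivAt_id w₁).mul_const (v₂ ^ 2)).add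
      (hasDerivAt_const w₁ (2 * w₂ * v₂ + w₂ ^ 2 * v₁))).const_mul (m / 2)
    simp only [id_eq] at this
    refine (this.congr_deriv (by ring)).congr_of_eventuallyEq (Filter.Eventually.of_forall fun w => ?_)
    simp only [Pi.add_apply]; ring
  have hg : HasDerivAt
      (fun w : ℝ => (m / 2) * (w * v₂ ^ 2 + 2 * w₂ * v₂ + w₂ ^ 2 * v₁) / (1 - w * v₁))
      (((m / 2) * v₂ ^ 2 * (1 - w₁ * v₁) -
        (m / 2) * (w₁ * v₂ ^ 2 + 2 * w₂ * v₂ + w₂ ^ 2 * v₁) * (-v₁)) / (1 - w₁ * v₁) ^ 2) w₁ :=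
    hNl.div hDlin hDne
  have hmain := hf.mul hg.exp
  have hpow : (1 - w₁ * v₁) ^ (-c - 1) = (1 - w₁ * v₁) ^ (-c) / (1 - w₁ * v₁) := by
    rw [eq_div_iff hDne, ← Real.rpow_add_one hDne (-c - 1)]; norm_num
  refine hmain.congr_deriv ?_
  rw [hpow]
  simp only [schrodingerLeibniz]
  field_simp
  ring

lemma sl_hasDerivAt_v1 (c m w₁ w₂ v₂ : ℝ) (v₁ : ℝ) (h : w₁ * v₁ < 1) :
    HasDerivAt (fun v => schrodingerLeibniz c m w₁ w₂ v v₂)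
      (schrodingerLeibniz c m w₁ w₂ v₁ v₂ *
        (c * w₁ / (1 - w₁ * v₁) +
          ((m / 2) * w₂ ^ 2 * (1 - w₁ * v₁) +
            (m / 2) * (w₁ * v₂ ^ 2 + 2 * w₂ * v₂ + w₂ ^ 2 * v₁) * w₁) /
            (1 - w₁ * v₁) ^ 2)) v₁ := by
  have hD : (0:ℝ) < 1 - w₁ * v₁ := by linarith
  have hDne : (1 - w₁ * v₁) ≠ 0 := ne_of_gt hD
  have hDlin : HasDerivAt (fun v : ℝ => 1 - w₁ * v) (-w₁) v₁ := by
    have := (hasDerivAt_const v₁ (1:ℝ)).sub ((hasDerivAt_id v₁).const_mul w₁)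
    exact this.congr_deriv (by ring)
  have hf : HasDerivAt (fun v : ℝ => (1 - w₁ * v) ^ (-c))
      ((-w₁) * (-c) * (1 - w₁ * v₁) ^ (-c - 1)) v₁ :=
    hDlin.rpow_const (Or.inl hDne)
  have hNl : HasDerivAt (fun v : ℝ => (m / 2) * (w₁ * v₂ ^ 2 + 2 * w₂ * v₂ + w₂ ^ 2 * v))
      ((m / 2) * w₂ ^ 2) v₁ := by
    have := ((hasDerivAt_const v₁ (w₁ * v₂ ^ 2 + 2 * w₂ * v₂)).add
      ((hasDerivAt_id v₁).const_mul (w₂ ^ 2))).const_mul (m / 2)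
    simp only [id_eq] at this
    refine this.congr_deriv ?_
    ring
  have hg : HasDerivAt
      (fun v : ℝ => (m / 2) * (w₁ * v₂ ^ 2 + 2 * w₂ * v₂ + w₂ ^ 2 * v) / (1 - w₁ * v))
      (((m / 2) * w₂ ^ 2 * (1 - w₁ * v₁) -
        (m / 2) * (w₁ * v₂ ^ 2 + 2 * w₂ * v₂ + w₂ ^ 2 * v₁) * (-w₁)) / (1 - w₁ * v₁) ^ 2) v₁ :=
    hNl.div hDlin hDne
  have hmain := hf.mul hg.exp
  have hpow : (1 - w₁ * v₁) ^ (-c - 1) = (1 - w₁ * v₁) ^ (-c) / (1 - w₁ * v₁) := by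
    rw [eq_div_iff hDne, ← Real.rpow_add_one hDne (-c - 1)]; norm_num
  refine hmain.congr_deriv ?_
  rw [hpow]
  simp only [schrodingerLeibniz]
  field_simp
  ring

/-- Berezin transforms of the subtracted Schrödinger elements `Pₜ − Pₓ²/(2m)` and
`K − G²/(2m)`: on the domain `w₁v₁ < 1`,
`∂Υ/∂w₁ − (1/(2m))∂²Υ/∂w₂² = (c − 1/2)(v₁/(1−w₁v₁))Υ` and
`∂Υ/∂v₁ − (1/(2m))∂²Υ/∂v₂² = (c − 1/2)(w₁/(1−w₁v₁))Υ`. -/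
theorem schrodinger_subtracted_berezin (c m : ℝ) (hm : m ≠ 0)
    (w₁ w₂ v₁ v₂ : ℝ) (h : w₁ * v₁ < 1) :
    (deriv (fun w => schrodingerLeibniz c m w w₂ v₁ v₂) w₁
        - (1 / (2 * m)) *
          deriv (fun w => deriv (fun w' => schrodingerLeibniz c m w₁ w' v₁ v₂) w) w₂
      = (c - 1 / 2) * (v₁ / (1 - w₁ * v₁)) * schrodingerLeibniz c m w₁ w₂ v₁ v₂) ∧
    (deriv (fun v => schrodingerLeibniz c m w₁ w₂ v v₂) v₁
        - (1 / (2 * m)) *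
          deriv (fun v => deriv (fun v' => schrodingerLeibniz c m w₁ w₂ v₁ v') v) v₂
      = (c - 1 / 2) * (w₁ / (1 - w₁ * v₁)) * schrodingerLeibniz c m w₁ w₂ v₁ v₂) := by
  have hD : (0:ℝ) < 1 - w₁ * v₁ := by linarith
  have hDne : (1 - w₁ * v₁) ≠ 0 := ne_of_gt hD
  constructor
  · have h1 := (sl_hasDerivAt_w1 c m w₂ v₁ v₂ w₁ h).deriv
    have hinner : (fun w => deriv (fun w' => schrodingerLeibniz c m w₁ w' v₁ v₂) w)
        = fun w => schrodingerLeibniz c m w₁ w v₁ v₂ * (m * (v₂ + w * v₁) / (1 - w₁ * v₁)) :=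
      funext fun w => (sl_hasDerivAt_w2 c m w₁ v₁ v₂ h w).deriv
    have hlin : HasDerivAt (fun w : ℝ => m * (v₂ + w * v₁) / (1 - w₁ * v₁))
        (m * v₁ / (1 - w₁ * v₁)) w₂ := by
      have := (((hasDerivAt_const w₂ v₂).add ((hasDerivAt_id w₂).mul_const v₁)).const_mul
        m).div_const (1 - w₁ * v₁)
      simpa using this
    have h2 : deriv (fun w => schrodingerLeibniz c m w₁ w v₁ v₂ * (m * (v₂ + w * v₁) / (1 - w₁ * v₁))) w₂ = _ := ((sl_hasDerivAt_w2 c m w₁ v₁ v₂ h w₂).mul hlin).deriv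
    rw [h1, hinner, h2]
    field_simp
    rw [div_eq_div_iff (pow_ne_zero 2 (by rwa [mul_comm] at hDne)) (by rwa [mul_comm] at hDne)]; ring
  · have h1 := (sl_hasDerivAt_v1 c m w₁ w₂ v₂ v₁ h).deriv
    have hinner : (fun v => deriv (fun v' => schrodingerLeibniz c m w₁ w₂ v₁ v') v)
        = fun v => schrodingerLeibniz c m w₁ w₂ v₁ v * (m * (w₁ * v + w₂) / (1 - w₁ * v₁)) :=
      funext fun v => (sl_hasDerivAt_v2 c m w₁ w₂ v₁ h v).deriv
    have hlin : HasDerivAt (fun v : ℝ => m * (w₁ * v + w₂) / (1 - w₁ * v₁))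
        (m * w₁ / (1 - w₁ * v₁)) v₂ := by
      have := ((((hasDerivAt_id v₂).const_mul w₁).add (hasDerivAt_const v₂ w₂)).const_mul
        m).div_const (1 - w₁ * v₁)
      simpa using this
    have h2 : deriv (fun v => schrodingerLeibniz c m w₁ w₂ v₁ v * (m * (w₁ * v + w₂) / (1 - w₁ * v₁))) v₂ = _ := ((sl_hasDerivAt_v2 c m w₁ w₂ v₁ h v₂).mul hlin).deriv
    rw [h1, hinner, h2]
    field_simp
    ring
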